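/- Suppose R is a regular resolution refutation of an unsatisfiable CNF formula φ of size s. Then there is a read-once branching program of size s solving the conflict clause search problem for φ: every full assignment is routed to a leaf labeled with a clause of φ it falsifies. Moreover, if R is an ordered resolution refutation (the resolution variables along every path respect a single total order), the branching program is an OBDD. -/

import Mathlib

/-- A clause: a finite set of literals, a literal being a variable (in ℕ) with a polarity. -/
abbrev Clause := Finset (ℕ × Bool)

/-- A CNF formula: a finite set of clauses. -/
abbrev CNF := Finset Clause

/-- An assignment falsifies a clause if it makes every literal in it false. -/
def Falsifies (σ : ℕ → Bool) (C : Clause) : Prop := ∀ l ∈ C, σ l.1 ≠ l.2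

/-- A CNF formula is unsatisfiable if every assignment falsifies some clause. -/
def Unsat (φ : CNF) : Prop := ∀ σ : ℕ → Bool, ∃ C ∈ φ, Falsifies σ C

/-- A branching program of size `s`: a DAG (nodes topologically indexed by `Fin s`)
with a unique source; each internal node queries a variable and has a 0- and a 1-edge;
each leaf is labeled by a clause. -/
structure BranchingProgram (s : ℕ) where
  source : Fin s
  isLeaf : Fin s → Bool
  leafClause : Fin s → Clause
  var : Fin s → ℕ
  next : Fin s → Bool → Fin s
  acyclic : ∀ v b, isLeaf v = false → v < next v b

namespace BranchingProgram

variable {s : ℕ} (B : BranchingProgram s)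

/-- One step of computation on assignment `σ` (leaves are fixed points). -/
def step (σ : ℕ → Bool) (v : Fin s) : Fin s :=
  if B.isLeaf v then v else B.next v (σ (B.var v))

/-- The leaf reached by following `σ` from the source. -/
def run (σ : ℕ → Bool) : Fin s := (B.step σ)^[s] B.source

/-- `l` is a path in the DAG starting at the source. -/
def IsSourcePath (l : List (Fin s)) : Prop :=
  l.head? = some B.source ∧
    List.Chain' (fun u v => B.isLeaf u = false ∧ ∃ b, v = B.next u b) l

/-- Read-once: no variable is queried twice along any source-to-leaf path. -/
def ReadOnce : Prop :=
  ∀ l : List (Fin s), B.IsSourcePath l →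
    ((l.filter (fun v => !B.isLeaf v)).map B.var).Nodup

/-- An OBDD: the variables queried along every path are consistent with a
single total order of the variables. -/
def IsOBDD : Prop :=
  ∃ ord : ℕ → ℕ, Function.Injective ord ∧
    ∀ l : List (Fin s), B.IsSourcePath l →
      ((l.filter (fun v => !B.isLeaf v)).map (fun v => ord (B.var v))).Pairwise (· < ·)

/-- `B` solves the conflict clause search problem for `φ`: every assignment is routed
to a leaf labeled by a clause of `φ` that it falsifies. -/
def SolvesSearch (φ : CNF) : Prop :=
  ∀ σ : ℕ → Bool,
    B.isLeaf (B.run σ) = true ∧ B.leafClause (B.run σ) ∈ φ ∧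
      Falsifies σ (B.leafClause (B.run σ))

end BranchingProgram

/-- A resolution refutation of `φ`, as a DAG of clauses (topologically indexed):
each line is an axiom (clause of `φ`) or is obtained by resolving two earlier
lines on a variable, and some line is the empty clause. -/
structure ResRefutation (φ : CNF) where
  size : ℕ
  clause : Fin size → Clause
  isAx : Fin size → Bool
  prem1 : Fin size → Fin size
  prem2 : Fin size → Fin size
  resVar : Fin size → ℕ
  ax_mem : ∀ i, isAx i = true → clause i ∈ φ
  prem1_lt : ∀ i, isAx i = false → prem1 i < i
  prem2_lt : ∀ i, isAx i = false → prem2 i < i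
  res_pos : ∀ i, isAx i = false → (resVar i, true) ∈ clause (prem1 i)
  res_neg : ∀ i, isAx i = false → (resVar i, false) ∈ clause (prem2 i)
  res_eq : ∀ i, isAx i = false →
    clause i =
      (clause (prem1 i)).erase (resVar i, true) ∪ (clause (prem2 i)).erase (resVar i, false)
  refutes : ∃ i, clause i = ∅

namespace ResRefutation

variable {φ : CNF} (R : ResRefutation φ)

/-- `l` is a path in the proof DAG (from a clause towards the axioms used to derive it). -/
def IsPath (l : List (Fin R.size)) : Prop :=
  List.Chain' (fun u v => R.isAx u = false ∧ (v = R.prem1 u ∨ v = R.prem2 u)) l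

/-- Regular: no variable is resolved on more than once along any path of the proof DAG. -/
def Regular : Prop :=
  ∀ l : List (Fin R.size), R.IsPath l →
    ((l.filter (fun v => !R.isAx v)).map R.resVar).Nodup

/-- Ordered: the resolved variables along every path of the proof DAG are consistent
with a single total order of the variables. -/
def Ordered : Prop :=
  ∃ ord : ℕ → ℕ, Function.Injective ord ∧
    ∀ l : List (Fin R.size), R.IsPath l →
      ((l.filter (fun v => !R.isAx v)).map (fun v => ord (R.resVar v))).Pairwise (· < ·)

end ResRefutation

/-- From a regular resolution refutation of an unsatisfiable CNF `φ` of size `s`, one gets a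
read-once branching program of size `s` solving the conflict clause search problem for `φ`;
moreover if the refutation is ordered, the branching program is an OBDD. -/
theorem regular_resolution_to_readonce_bp (φ : CNF) (hφ : Unsat φ)
    (R : ResRefutation φ) (hreg : R.Regular) :
    ∃ B : BranchingProgram R.size, B.ReadOnce ∧ B.SolvesSearch φ ∧
      (R.Ordered → B.IsOBDD) := by
  classical
  obtain ⟨i₀, hi₀⟩ := R.refutes
  have hspos : 0 < R.size := i₀.pos
  let s := R.size
  let rev : Fin s → Fin s := fun i => ⟨s - 1 - i.val, by omega⟩
  have hrev_rev : ∀ i, rev (rev i) = i := by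
    intro i; have := i.isLt
    simp only [rev]; ext; simp; omega
  have hrev_lt : ∀ {i j : Fin s}, i < j → rev j < rev i := by
    intro i j h
    have hj := j.isLt
    simp only [rev, Fin.lt_def] at *
    omega
  let B : BranchingProgram s :=
    { source := rev i₀
      isLeaf := fun v => R.isAx (rev v)
      leafClause := fun v => R.clause (rev v)
      var := fun v => R.resVar (rev v)
      next := fun v b => rev (if b then R.prem2 (rev v) else R.prem1 (rev v))
      acyclic := by
        intro v b h
        have h1 : (if b then R.prem2 (rev v) else R.prem1 (rev v)) < rev v := by
          cases b
          · simpa using R.prem1_lt _ h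
          · simpa using R.prem2_lt _ h
        have h2 := hrev_lt h1
        rwa [hrev_rev] at h2 }
  have hpath : ∀ l : List (Fin s), B.IsSourcePath l → R.IsPath (l.map rev) := by
    intro l hl
    rw [ResRefutation.IsPath, List.Chain', List.isChain_map]
    refine List.IsChain.imp ?_ hl.2
    rintro u v ⟨hax, b, rfl⟩
    refine ⟨hax, ?_⟩
    cases b
    · left; show rev (rev (R.prem1 (rev u))) = _; rw [hrev_rev]
    · right; show rev (rev (R.prem2 (rev u))) = _; rw [hrev_rev]
  have hfm : ∀ (l : List (Fin s)) (p : Fin s → Bool),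
      (l.map rev).filter p = (l.filter (fun v => p (rev v))).map rev := by
    intro l p
    induction l with
    | nil => simp
    | cons a t ih => by_cases h : p (rev a) <;> simp [h, ih]
  have hstep_leaf : ∀ (σ : ℕ → Bool) v, B.isLeaf v = true → B.step σ v = v := by
    intro σ v h; rw [BranchingProgram.step, if_pos h]
  have hterm : ∀ (σ : ℕ → Bool) n,
      B.isLeaf ((B.step σ)^[n] B.source) = true ∨ n ≤ ((B.step σ)^[n] B.source).val := by
    intro σ n
    induction n with
    | zero => right; omega
    | succ n ih =>
      rw [Function.iterate_succ_apply']
      rcases ih with h | h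
      · left; rw [hstep_leaf σ _ h]; exact h
      · by_cases hL : B.isLeaf ((B.step σ)^[n] B.source) = true
        · left; rw [hstep_leaf σ _ hL]; exact hL
        · right
          have hL' : B.isLeaf ((B.step σ)^[n] B.source) = false := by
            simpa using hL
          have hlt := B.acyclic _ (σ (B.var ((B.step σ)^[n] B.source))) hL'
          rw [Fin.lt_def] at hlt
          rw [BranchingProgram.step, if_neg (by rw [hL']; exact Bool.false_ne_true)]
          omega
  have hrun_leaf : ∀ σ : ℕ → Bool, B.isLeaf (B.run σ) = true := by
    intro σ
    rcases hterm σ s with h | h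
    · exact h
    · exact absurd ((B.step σ)^[s] B.source).isLt (by omega)
  have hinv : ∀ (σ : ℕ → Bool) n,
      Falsifies σ (R.clause (rev ((B.step σ)^[n] B.source))) := by
    intro σ n
    induction n with
    | zero =>
      show Falsifies σ (R.clause (rev (rev i₀)))
      rw [hrev_rev, hi₀]
      intro l hl; simp at hl
    | succ n ih =>
      rw [Function.iterate_succ_apply']
      set v := (B.step σ)^[n] B.source with hv
      by_cases hL : B.isLeaf v = true
      · rw [hstep_leaf σ v hL]; exact ih
      · have hL' : B.isLeaf v = false := by simpa using hL
        have hax : R.isAx (rev v) = false := hL'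
        rw [BranchingProgram.step, if_neg (by rw [hL']; exact Bool.false_ne_true)]
        have hres := R.res_eq (rev v) hax
        have hbv : σ (B.var v) = σ (R.resVar (rev v)) := rfl
        cases hb : σ (R.resVar (rev v))
        · -- go to prem1
          have hnx : rev (B.next v false) = R.prem1 (rev v) := by
            show rev (rev _) = _
            simp [hrev_rev]
          rw [hnx]
          intro l hl
          by_cases hlx : l = (R.resVar (rev v), true)
          · subst hlx; simpa using hb
          · have hmem : l ∈ (R.clause (R.prem1 (rev v))).erase (R.resVar (rev v), true) :=
              Finset.mem_erase.mpr ⟨hlx, hl⟩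
            have : l ∈ R.clause (rev v) := by
              rw [hres]; exact Finset.mem_union_left _ hmem
            exact ih l this
        · -- go to prem2
          have hnx : rev (B.next v true) = R.prem2 (rev v) := by
            show rev (rev _) = _
            simp [hrev_rev]
          rw [hnx]
          intro l hl
          by_cases hlx : l = (R.resVar (rev v), false)
          · subst hlx; simpa using hb
          · have hmem : l ∈ (R.clause (R.prem2 (rev v))).erase (R.resVar (rev v), false) :=
              Finset.mem_erase.mpr ⟨hlx, hl⟩
            have : l ∈ R.clause (rev v) := by
              rw [hres]; exact Finset.mem_union_right _ hmem
            exact ih l this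
  refine ⟨B, ?_, ?_, ?_⟩
  · -- ReadOnce
    intro l hl
    have hN := hreg (l.map rev) (hpath l hl)
    rw [hfm, List.map_map] at hN
    exact hN
  · -- SolvesSearch
    intro σ
    have h1 := hrun_leaf σ
    exact ⟨h1, R.ax_mem _ h1, hinv σ s⟩
  · -- Ordered → OBDD
    rintro ⟨ord, hinj, hord⟩
    refine ⟨ord, hinj, ?_⟩
    intro l hl
    have hP := hord (l.map rev) (hpath l hl)
    rw [hfm, List.map_map] at hP
    exact hP
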